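/- Let R be a commutative ring with identity, let k be a positive integer and let p = 4k+1 be prime. For all a, b, c in R, the quadratic residue circulant matrix satisfies Q_p(a,b,c) · Q_p(a,b,c)^T = Q_p( a² + 2k(b² + c²), 2ab − b² + k(b+c)², 2ac − c² + k(b+c)² ). -/

import Mathlib

noncomputable section

open Matrix
open scoped Classical

open scoped Classical
open Finset

namespace QcircAux

variable {F : Type*} [Field F] [Fintype F] [DecidableEq F]

local notation "χ" => quadraticChar F

theorem jacobsthal (hF : ringChar F ≠ 2) {d : F} (hd : d ≠ 0) :
    ∑ x : F, χ x * χ (x - d) = -1 := by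
  have h1 : ∀ x : F, x ≠ 0 → χ x * χ (x - d) = χ (1 - d * x⁻¹) := by
    intro x hx
    have : x - d = x * (1 - d * x⁻¹) := by field_simp
    rw [this, _root_.map_mul, ← mul_assoc, ← _root_.map_mul, ← sq, quadraticChar_sq_one' hx, one_mul]
  rw [← Finset.sum_erase_add _ _ (Finset.mem_univ (0:F))]
  simp only [quadraticChar_zero, zero_mul, add_zero]
  rw [Finset.sum_congr rfl (fun x hx => h1 x (Finset.ne_of_mem_erase hx))]
  have hbij : ∑ x ∈ Finset.univ.erase (0:F), χ (1 - d * x⁻¹)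
      = ∑ y ∈ Finset.univ.erase (1:F), χ y := by
    apply Finset.sum_nbij' (fun x => 1 - d * x⁻¹) (fun y => d * (1 - y)⁻¹)
    · intro x hx
      have hx0 : x ≠ 0 := Finset.ne_of_mem_erase hx
      simp only [Finset.mem_erase, Finset.mem_univ, and_true]
      intro h
      have : d * x⁻¹ = 0 := by linear_combination -h
      rcases mul_eq_zero.1 this with h' | h'
      · exact hd h'
      · exact hx0 (inv_eq_zero.1 h')
    · intro y hy
      have hy1 : y ≠ 1 := Finset.ne_of_mem_erase hy
      simp only [Finset.mem_erase, Finset.mem_univ, and_true]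
      exact mul_ne_zero hd (inv_ne_zero (sub_ne_zero.2 (Ne.symm hy1)))
    · intro x hx
      have hx0 : x ≠ 0 := Finset.ne_of_mem_erase hx
      field_simp
      rw [sub_sub_cancel, div_self hd]
    · intro y hy
      have hy1 : y ≠ 1 := Finset.ne_of_mem_erase hy
      have : (1:F) - y ≠ 0 := sub_ne_zero.2 (Ne.symm hy1)
      field_simp
      rw [sub_sub_cancel]
    · intro x hx; rfl
  rw [hbij]
  have h2 := Finset.sum_erase_add Finset.univ (fun y => χ y) (Finset.mem_univ (1:F))
  rw [quadraticChar_sum_zero hF] at h2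
  simp only [_root_.map_one] at h2
  linarith

theorem chi_neg (hneg : IsSquare (-1 : F)) (x : F) : χ (-x) = χ x := by
  obtain ⟨s, hs⟩ := hneg
  have hs0 : s ≠ 0 := by
    intro h; rw [h, mul_zero] at hs
    exact one_ne_zero (neg_eq_zero.1 hs)
  have : (-x : F) = s * s * x := by rw [← hs]; ring
  rw [this, _root_.map_mul, _root_.map_mul, ← sq, quadraticChar_sq_one hs0, one_mul]

theorem isSquare_neg_iff (hneg : IsSquare (-1 : F)) (x : F) :
    IsSquare (-x) ↔ IsSquare x := by
  obtain ⟨s, hs⟩ := hneg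
  constructor
  · rintro ⟨t, ht⟩
    exact ⟨s * t, by linear_combination -ht + (t*t) * hs⟩
  · rintro ⟨t, ht⟩
    exact ⟨s * t, by linear_combination -ht + (t*t) * hs⟩

theorem sum_chi_erase (hF : ringChar F ≠ 2) {d : F} (hd : d ≠ 0) :
    ∑ x ∈ (Finset.univ.erase (0:F)).erase d, χ x = -χ d := by
  have hmem : d ∈ Finset.univ.erase (0:F) := Finset.mem_erase.2 ⟨hd, Finset.mem_univ d⟩
  have h1 := Finset.sum_erase_add (Finset.univ.erase (0:F)) (fun x => χ x) hmem
  have h2 := Finset.sum_erase_add Finset.univ (fun x => χ x) (Finset.mem_univ (0:F))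
  rw [quadraticChar_sum_zero hF] at h2
  simp only [quadraticChar_zero] at h2
  linarith

theorem sum_chi_shift (hF : ringChar F ≠ 2) (hneg : IsSquare (-1 : F)) {d : F} (hd : d ≠ 0) :
    ∑ x ∈ (Finset.univ.erase (0:F)).erase d, χ (x - d) = -χ d := by
  have htot : ∑ x : F, χ (x - d) = 0 := by
    rw [Fintype.sum_equiv (Equiv.subRight d) (fun x => χ (x - d)) (fun y => χ y)
      (fun x => rfl)]
    exact quadraticChar_sum_zero hF
  have hmem : d ∈ Finset.univ.erase (0:F) := Finset.mem_erase.2 ⟨hd, Finset.mem_univ d⟩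
  have h1 := Finset.sum_erase_add (Finset.univ.erase (0:F)) (fun x => χ (x - d)) hmem
  have h2 := Finset.sum_erase_add Finset.univ (fun x => χ (x - d)) (Finset.mem_univ (0:F))
  rw [htot] at h2
  simp only [sub_self, quadraticChar_zero, zero_sub, chi_neg hneg] at h1 h2
  linarith

theorem sum_chi_mul_erase (hF : ringChar F ≠ 2) {d : F} (hd : d ≠ 0) :
    ∑ x ∈ (Finset.univ.erase (0:F)).erase d, χ x * χ (x - d) = -1 := by
  have htot := jacobsthal hF hd
  have hmem : d ∈ Finset.univ.erase (0:F) := Finset.mem_erase.2 ⟨hd, Finset.mem_univ d⟩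
  have h1 := Finset.sum_erase_add (Finset.univ.erase (0:F)) (fun x => χ x * χ (x - d)) hmem
  have h2 := Finset.sum_erase_add Finset.univ (fun x => χ x * χ (x - d)) (Finset.mem_univ (0:F))
  rw [htot] at h2
  simp only [sub_self, quadraticChar_zero, zero_mul, mul_zero, add_zero] at h1 h2
  linarith

theorem indicator_sq {x : F} (hx : x ≠ 0) {inst : Decidable (IsSquare x)} :
    (@ite ℤ (IsSquare x) inst 2 0) = 1 + 1 * χ x := by
  by_cases h : IsSquare x
  · rw [if_pos h, (quadraticChar_one_iff_isSquare hx).2 h]; ring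
  · rw [if_neg h, quadraticChar_neg_one_iff_not_isSquare.2 h]; ring

theorem indicator_nsq {x : F} (hx : x ≠ 0) {inst : Decidable (¬ IsSquare x)} :
    (@ite ℤ (¬ IsSquare x) inst 2 0) = 1 + (-1) * χ x := by
  by_cases h : IsSquare x
  · rw [if_neg (not_not.2 h), (quadraticChar_one_iff_isSquare hx).2 h]; ring
  · rw [if_pos h, quadraticChar_neg_one_iff_not_isSquare.2 h]; ring

theorem two_mul_count (hF : ringChar F ≠ 2) (ε : ℤ) (P : F → Prop) [DecidablePred P]
    (h : ∀ x : F, x ≠ 0 → (if P x then (2:ℤ) else 0) = 1 + ε * χ x) :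
    (2:ℤ) * ((Finset.univ.erase (0:F)).filter P).card = Fintype.card F - 1 := by
  have hsum0 : ∑ x ∈ Finset.univ.erase (0:F), χ x = 0 := by
    have h2 := Finset.sum_erase_add Finset.univ (fun x => χ x) (Finset.mem_univ (0:F))
    rw [quadraticChar_sum_zero hF] at h2
    simp only [quadraticChar_zero] at h2
    linarith
  have key : ∑ x ∈ Finset.univ.erase (0:F), (if P x then (2:ℤ) else 0)
      = ∑ x ∈ Finset.univ.erase (0:F), (1 + ε * χ x) :=
    Finset.sum_congr rfl (fun x hx => h x (Finset.ne_of_mem_erase hx))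
  rw [Finset.sum_add_distrib, ← Finset.mul_sum, hsum0, mul_zero, add_zero,
    Finset.sum_const] at key
  rw [← Finset.sum_filter] at key
  rw [Finset.sum_const] at key
  have hcard : (Finset.univ.erase (0:F)).card = Fintype.card F - 1 := by
    rw [Finset.card_erase_of_mem (Finset.mem_univ _), Finset.card_univ]
  have hpos : 1 ≤ Fintype.card F := Fintype.card_pos
  rw [hcard] at key
  simp only [nsmul_eq_mul, mul_comm] at key ⊢
  push_cast [Nat.cast_sub hpos] at key ⊢
  linarith

theorem four_mul_count (hF : ringChar F ≠ 2) (hneg : IsSquare (-1 : F)) {d : F} (hd : d ≠ 0)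
    (ε₁ ε₂ : ℤ) (P₁ P₂ : F → Prop) [DecidablePred P₁] [DecidablePred P₂]
    (h₁ : ∀ x : F, x ≠ 0 → (if P₁ x then (2:ℤ) else 0) = 1 + ε₁ * χ x)
    (h₂ : ∀ x : F, x ≠ 0 → (if P₂ x then (2:ℤ) else 0) = 1 + ε₂ * χ x) :
    (4:ℤ) * (((Finset.univ.erase (0:F)).erase d).filter (fun x => P₁ x ∧ P₂ (x - d))).card
      = (Fintype.card F : ℤ) - 2 - (ε₁ + ε₂) * χ d - ε₁ * ε₂ := by
  set s := (Finset.univ.erase (0:F)).erase d with hs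
  have hx_ne : ∀ x ∈ s, x ≠ 0 ∧ x - d ≠ 0 := by
    intro x hx
    rw [hs, Finset.mem_erase, Finset.mem_erase] at hx
    exact ⟨hx.2.1, sub_ne_zero.2 hx.1⟩
  have key : ∑ x ∈ s, (if P₁ x ∧ P₂ (x - d) then (4:ℤ) else 0)
      = ∑ x ∈ s, (1 + ε₁ * χ x) * (1 + ε₂ * χ (x - d)) := by
    refine Finset.sum_congr rfl (fun x hx => ?_)
    obtain ⟨hx0, hxd⟩ := hx_ne x hx
    rw [← h₁ x hx0, ← h₂ (x - d) hxd]
    by_cases p1 : P₁ x <;> by_cases p2 : P₂ (x - d) <;> simp [p1, p2]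
  have expand : ∑ x ∈ s, (1 + ε₁ * χ x) * (1 + ε₂ * χ (x - d))
      = s.card + ε₁ * (∑ x ∈ s, χ x) + ε₂ * (∑ x ∈ s, χ (x - d))
        + (ε₁ * ε₂) * ∑ x ∈ s, χ x * χ (x - d) := by
    have hpt : ∀ x ∈ s, ((1:ℤ) + ε₁ * χ x) * (1 + ε₂ * χ (x - d))
        = 1 + (ε₁ * χ x + (ε₂ * χ (x - d) + ε₁ * ε₂ * (χ x * χ (x - d)))) :=
      fun x _ => by ring
    rw [Finset.sum_congr rfl hpt, Finset.sum_add_distrib, Finset.sum_add_distrib,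
      Finset.sum_add_distrib, Finset.sum_const, ← Finset.mul_sum, ← Finset.mul_sum,
      ← Finset.mul_sum, nsmul_eq_mul, mul_one]
    ring
  rw [sum_chi_erase hF hd, sum_chi_shift hF hneg hd, sum_chi_mul_erase hF hd] at expand
  have hscard : (s.card : ℤ) = (Fintype.card F : ℤ) - 2 := by
    have h2le : 2 ≤ Fintype.card F := Fintype.one_lt_card_iff_nontrivial.2 ⟨⟨0, d, fun h => hd h.symm⟩⟩
    have : s.card = Fintype.card F - 2 := by
      rw [hs, Finset.card_erase_of_mem (Finset.mem_erase.2 ⟨hd, Finset.mem_univ d⟩),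
        Finset.card_erase_of_mem (Finset.mem_univ _), Finset.card_univ]
      omega
    omega
  rw [← Finset.sum_filter, Finset.sum_const, nsmul_eq_mul] at key
  rw [mul_comm (4:ℤ), key, expand, hscard]
  ring


theorem key_sum {R : Type*} [CommRing R] (k : ℕ) (hk : 0 < k)
    (hp : Nat.Prime (4 * k + 1)) (a b c : R) (d : ZMod (4 * k + 1)) :
    ∑ x : ZMod (4 * k + 1),
      (if x = 0 then a else if IsSquare x then b else c) *
      (if x - d = 0 then a else if IsSquare (x - d) then b else c)
    = if d = 0 then a ^ 2 + 2 * (k : R) * (b ^ 2 + c ^ 2)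
      else if IsSquare d then 2 * a * b - b ^ 2 + (k : R) * (b + c) ^ 2
      else 2 * a * c - c ^ 2 + (k : R) * (b + c) ^ 2 := by
  haveI : Fact (Nat.Prime (4 * k + 1)) := ⟨hp⟩
  have hF : ringChar (ZMod (4 * k + 1)) ≠ 2 := by
    rw [ZMod.ringChar_zmod_n]; omega
  have hcard : Fintype.card (ZMod (4 * k + 1)) = 4 * k + 1 := ZMod.card _
  have hneg : IsSquare (-1 : ZMod (4 * k + 1)) :=
    (ZMod.exists_sq_eq_neg_one_iff).2 (by omega)
  by_cases hd : d = 0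
  · subst hd
    rw [if_pos rfl]
    simp only [sub_zero]
    rw [← Finset.sum_erase_add _ _ (Finset.mem_univ (0 : ZMod (4 * k + 1)))]
    rw [if_pos rfl]
    have hpt : ∀ x ∈ Finset.univ.erase (0 : ZMod (4 * k + 1)),
        (if x = 0 then a else if IsSquare x then b else c) *
          (if x = 0 then a else if IsSquare x then b else c)
        = if IsSquare x then b * b else c * c := by
      intro x hx
      rw [if_neg (Finset.ne_of_mem_erase hx)]
      by_cases h : IsSquare x <;> simp [h]
    rw [Finset.sum_congr rfl hpt, Finset.sum_ite, Finset.sum_const, Finset.sum_const]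
    have c1 := two_mul_count hF 1 (fun x => IsSquare x) (fun x hx => indicator_sq hx)
    have c2 := two_mul_count hF (-1) (fun x => ¬ IsSquare x) (fun x hx => indicator_nsq hx)
    rw [hcard] at c1 c2
    have e1 : ((Finset.univ.erase (0 : ZMod (4 * k + 1))).filter (fun x => IsSquare x)).card
        = 2 * k := by omega
    have e2 : ((Finset.univ.erase (0 : ZMod (4 * k + 1))).filter (fun x => ¬ IsSquare x)).card
        = 2 * k := by omega
    rw [e1, e2]
    simp only [nsmul_eq_mul]
    push_cast
    ring
  · rw [if_neg hd]
    have hmemd : d ∈ Finset.univ.erase (0 : ZMod (4 * k + 1)) :=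
      Finset.mem_erase.2 ⟨hd, Finset.mem_univ d⟩
    rw [← Finset.sum_erase_add _ _ (Finset.mem_univ (0 : ZMod (4 * k + 1))),
      ← Finset.sum_erase_add _ _ hmemd]
    have hx_ne : ∀ x ∈ (Finset.univ.erase (0 : ZMod (4 * k + 1))).erase d,
        x ≠ 0 ∧ x - d ≠ 0 := by
      intro x hx
      rw [Finset.mem_erase, Finset.mem_erase] at hx
      exact ⟨hx.2.1, sub_ne_zero.2 hx.1⟩
    have hpt : ∀ x ∈ (Finset.univ.erase (0 : ZMod (4 * k + 1))).erase d,
        (if x = 0 then a else if IsSquare x then b else c) *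
          (if x - d = 0 then a else if IsSquare (x - d) then b else c)
        = (if IsSquare x ∧ IsSquare (x - d) then b * b else 0)
          + ((if IsSquare x ∧ ¬ IsSquare (x - d) then b * c else 0)
          + ((if ¬ IsSquare x ∧ IsSquare (x - d) then c * b else 0)
          + (if ¬ IsSquare x ∧ ¬ IsSquare (x - d) then c * c else 0))) := by
      intro x hx
      obtain ⟨hx0, hxd⟩ := hx_ne x hx
      rw [if_neg hx0, if_neg hxd]
      by_cases p1 : IsSquare x <;> by_cases p2 : IsSquare (x - d) <;> simp [p1, p2]
    rw [Finset.sum_congr rfl hpt, Finset.sum_add_distrib, Finset.sum_add_distrib,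
      Finset.sum_add_distrib, ← Finset.sum_filter, ← Finset.sum_filter,
      ← Finset.sum_filter, ← Finset.sum_filter, Finset.sum_const, Finset.sum_const,
      Finset.sum_const, Finset.sum_const]
    have cqq := four_mul_count hF hneg hd 1 1 (fun x => IsSquare x) (fun x => IsSquare x)
      (fun x hx => indicator_sq hx) (fun x hx => indicator_sq hx)
    have cqn := four_mul_count hF hneg hd 1 (-1) (fun x => IsSquare x) (fun x => ¬ IsSquare x)
      (fun x hx => indicator_sq hx) (fun x hx => indicator_nsq hx)
    have cnq := four_mul_count hF hneg hd (-1) 1 (fun x => ¬ IsSquare x) (fun x => IsSquare x)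
      (fun x hx => indicator_nsq hx) (fun x hx => indicator_sq hx)
    have cnn := four_mul_count hF hneg hd (-1) (-1) (fun x => ¬ IsSquare x) (fun x => ¬ IsSquare x)
      (fun x hx => indicator_nsq hx) (fun x hx => indicator_nsq hx)
    beta_reduce at cqq cqn cnq cnn
    rw [hcard] at cqq cqn cnq cnn
    have hterm0 : ((if (0 : ZMod (4 * k + 1)) = 0 then a
          else if IsSquare (0 : ZMod (4 * k + 1)) then b else c) *
        (if (0 : ZMod (4 * k + 1)) - d = 0 then a
          else if IsSquare ((0 : ZMod (4 * k + 1)) - d) then b else c))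
        = a * (if IsSquare d then b else c) := by
      rw [if_pos rfl, zero_sub, if_neg (neg_ne_zero.2 hd),
        if_congr (isSquare_neg_iff hneg d) rfl rfl]
    have htermd : ((if d = 0 then a else if IsSquare d then b else c) *
        (if d - d = 0 then a else if IsSquare (d - d) then b else c))
        = (if IsSquare d then b else c) * a := by
      rw [if_neg hd, sub_self, if_pos rfl]
    rw [hterm0, htermd]
    by_cases hsq : IsSquare d
    · have hχ : quadraticChar (ZMod (4 * k + 1)) d = 1 :=
        (quadraticChar_one_iff_isSquare hd).2 hsq
      rw [hχ] at cqq cqn cnq cnn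
      have eqq : (((Finset.univ.erase (0 : ZMod (4 * k + 1))).erase d).filter
          (fun x => IsSquare x ∧ IsSquare (x - d))).card = k - 1 := by omega
      have eqn : (((Finset.univ.erase (0 : ZMod (4 * k + 1))).erase d).filter
          (fun x => IsSquare x ∧ ¬ IsSquare (x - d))).card = k := by omega
      have enq : (((Finset.univ.erase (0 : ZMod (4 * k + 1))).erase d).filter
          (fun x => ¬ IsSquare x ∧ IsSquare (x - d))).card = k := by omega
      have enn : (((Finset.univ.erase (0 : ZMod (4 * k + 1))).erase d).filter
          (fun x => ¬ IsSquare x ∧ ¬ IsSquare (x - d))).card = k := by omega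
      rw [if_pos hsq, if_pos hsq, eqq, eqn, enq, enn]
      simp only [nsmul_eq_mul]
      push_cast [Nat.cast_sub hk]
      ring
    · have hχ : quadraticChar (ZMod (4 * k + 1)) d = -1 :=
        quadraticChar_neg_one_iff_not_isSquare.2 hsq
      rw [hχ] at cqq cqn cnq cnn
      have eqq : (((Finset.univ.erase (0 : ZMod (4 * k + 1))).erase d).filter
          (fun x => IsSquare x ∧ IsSquare (x - d))).card = k := by omega
      have eqn : (((Finset.univ.erase (0 : ZMod (4 * k + 1))).erase d).filter
          (fun x => IsSquare x ∧ ¬ IsSquare (x - d))).card = k := by omega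
      have enq : (((Finset.univ.erase (0 : ZMod (4 * k + 1))).erase d).filter
          (fun x => ¬ IsSquare x ∧ IsSquare (x - d))).card = k := by omega
      have enn : (((Finset.univ.erase (0 : ZMod (4 * k + 1))).erase d).filter
          (fun x => ¬ IsSquare x ∧ ¬ IsSquare (x - d))).card = k - 1 := by omega
      rw [if_neg hsq, if_neg hsq, eqq, eqn, enq, enn]
      simp only [nsmul_eq_mul]
      push_cast [Nat.cast_sub hk]
      ring

end QcircAux


/-- The quadratic residue circulant matrix `Q_p(a,b,c)`: the `p × p` circulant matrix
(indexed by `ZMod p`) whose `(i,j)` entry is `a` if `j - i = 0`, `b` if `j - i` is a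
nonzero quadratic residue modulo `p`, and `c` if `j - i` is a quadratic non-residue. -/
def Qcirc {R : Type*} [CommRing R] (p : ℕ) (a b c : R) :
    Matrix (ZMod p) (ZMod p) R :=
  Matrix.of fun i j =>
    if j - i = 0 then a else if IsSquare (j - i) then b else c

/-- Gaborit's quadratic residue circulant identity for primes `p = 4k + 1`. -/
theorem qcirc_mul_transpose_of_prime_four_mul_add_one
    {R : Type*} [CommRing R] (k : ℕ) (hk : 0 < k)
    (hp : Nat.Prime (4 * k + 1)) (a b c : R) :
    Qcirc (4 * k + 1) a b c * (Qcirc (4 * k + 1) a b c)ᵀ =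
      Qcirc (4 * k + 1)
        (a ^ 2 + 2 * (k : R) * (b ^ 2 + c ^ 2))
        (2 * a * b - b ^ 2 + (k : R) * (b + c) ^ 2)
        (2 * a * c - c ^ 2 + (k : R) * (b + c) ^ 2) := by

  ext i j
  rw [Matrix.mul_apply]
  simp only [Qcirc, Matrix.transpose_apply, Matrix.of_apply]
  have hsum : (∑ m : ZMod (4 * k + 1),
      (if m - i = 0 then a else if IsSquare (m - i) then b else c) *
        (if m - j = 0 then a else if IsSquare (m - j) then b else c))
      = ∑ x : ZMod (4 * k + 1),
      (if x = 0 then a else if IsSquare x then b else c) *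
        (if x - (j - i) = 0 then a else if IsSquare (x - (j - i)) then b else c) := by
    refine (Fintype.sum_equiv (Equiv.addRight i) _ _ ?_).symm
    intro x
    simp only [Equiv.coe_addRight]
    have e1 : x + i - i = x := add_sub_cancel_right x i
    have e2 : x + i - j = x - (j - i) := by ring
    simp only [e1, e2]
  have main : (∑ m : ZMod (4 * k + 1),
      (if m - i = 0 then a else if IsSquare (m - i) then b else c) *
        (if m - j = 0 then a else if IsSquare (m - j) then b else c))
      = if j - i = 0 then a ^ 2 + 2 * (k : R) * (b ^ 2 + c ^ 2)
        else if IsSquare (j - i) then 2 * a * b - b ^ 2 + (k : R) * (b + c) ^ 2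
        else 2 * a * c - c ^ 2 + (k : R) * (b + c) ^ 2 := by
    rw [hsum, QcircAux.key_sum k hk hp a b c (j - i)]
  convert main using 2 <;> split_ifs <;> rfl

end
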